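/- Let V be a finite-dimensional vector space over a field of characteristic 0, B a nondegenerate symmetric bilinear form on V, and N a nilpotent endomorphism with B(Nx, y) + B(x, Ny) = 0 for all x, y. Then the monodromy weight filtration W of N is self-dual with respect to B: the orthogonal complement of W_m equals W_{-m-1} for all m ∈ ℤ. -/
import Mathlib

/-- `W` is the monodromy weight filtration of the nilpotent endomorphism `N`,
centered at `0`: it is increasing, exhaustive and separated, satisfies
`N (W m) ⊆ W (m-2)`, and for every `k ≥ 0` the map induced by `N ^ k` gives an
isomorphism `gr^W_k → gr^W_{-k}` (expressed by the injectivity and surjectivity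
conditions on associated graded pieces). -/
def IsWeightFiltration {K V : Type*} [Field K] [AddCommGroup V] [Module K V]
    (N : V →ₗ[K] V) (W : ℤ → Submodule K V) : Prop :=
  Monotone W ∧ (∃ m : ℤ, W m = ⊥) ∧ (∃ m : ℤ, W m = ⊤) ∧
  (∀ m : ℤ, (W m).map N ≤ W (m - 2)) ∧
  (∀ k : ℕ,
    W (k : ℤ) ⊓ (W (-(k : ℤ) - 1)).comap (N ^ k) ≤ W ((k : ℤ) - 1) ∧
    W (-(k : ℤ)) ≤ W (-(k : ℤ) - 1) ⊔ (W (k : ℤ)).map (N ^ k))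

section Aux

open Module

variable {K V : Type*} [Field K] [AddCommGroup V] [Module K V]

/-- Moving `N ^ k` across `B` produces a sign `(-1)^k`. -/
lemma aux_pow (B : V →ₗ[K] V →ₗ[K] K) (N : V →ₗ[K] V)
    (hinf : ∀ x y : V, B (N x) y + B x (N y) = 0) :
    ∀ (k : ℕ) (x z : V), B x ((N ^ k) z) = (-1 : K) ^ k * B ((N ^ k) x) z := by
  intro k
  induction k with
  | zero => intro x z; simp
  | succ k ih =>
    intro x z
    have h1 : (N ^ (k + 1)) z = (N ^ k) (N z) := by
      rw [pow_succ]; rfl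
    have h2 : N ((N ^ k) x) = (N ^ (k + 1)) x := by
      rw [pow_succ']; rfl
    have h3 : B ((N ^ k) x) (N z) = - B (N ((N ^ k) x)) z := by
      have h := hinf ((N ^ k) x) z
      linear_combination h
    rw [h1, ih x (N z), h3, h2]
    ring

/-- Iterated version of `N (W m) ⊆ W (m - 2)`. -/
lemma aux_map (N : V →ₗ[K] V) (W : ℤ → Submodule K V)
    (hmap : ∀ m : ℤ, (W m).map N ≤ W (m - 2)) :
    ∀ (k : ℕ) (j : ℤ), ∀ x ∈ W j, (N ^ k) x ∈ W (j - 2 * k) := by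
  intro k
  induction k with
  | zero => intro j x hx; simpa using hx
  | succ k ih =>
    intro j x hx
    have h1 : (N ^ (k + 1)) x = N ((N ^ k) x) := by
      rw [pow_succ']; rfl
    have h2 : (N ^ k) x ∈ W (j - 2 * k) := ih j x hx
    have h3 : N ((N ^ k) x) ∈ W (j - 2 * k - 2) :=
      hmap (j - 2 * k) ⟨(N ^ k) x, h2, rfl⟩
    have h4 : j - 2 * k - 2 = j - 2 * (k + 1 : ℕ) := by push_cast; ring
    rw [h1]; rw [h4] at h3; exact h3

/-- Orthogonality of `W m` and `W m'` when `m + m' ≤ -1`. -/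
lemma aux_orth (B : V →ₗ[K] V →ₗ[K] K)
    (hsymm : ∀ x y : V, B x y = B y x)
    (N : V →ₗ[K] V)
    (hinf : ∀ x y : V, B (N x) y + B x (N y) = 0)
    (W : ℤ → Submodule K V) (hW : IsWeightFiltration N W) :
    ∀ m m' : ℤ, m + m' ≤ -1 → ∀ x ∈ W m, ∀ y ∈ W m', B x y = 0 := by
  obtain ⟨hmono, ⟨m₀, hbot⟩, -, hmap, hgr⟩ := hW
  have hbot' : ∀ j ≤ m₀, ∀ y ∈ W j, y = 0 := by
    intro j hj y hy
    have : y ∈ (⊥ : Submodule K V) := hbot ▸ (hmono hj hy)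
    simpa using this
  have key : ∀ n : ℕ, ∀ m m' : ℤ, m' ≤ m₀ + n → m' ≤ m → m + m' ≤ -1 →
      ∀ x ∈ W m, ∀ y ∈ W m', B x y = 0 := by
    intro n
    induction n with
    | zero =>
      intro m m' h1 _ _ x _ y hy
      have : y = 0 := hbot' m' (by omega) y hy
      simp [this]
    | succ n ih =>
      intro m m' h1 hmm hsum x hx y hy
      by_cases hc : m' ≤ m₀ + n
      · exact ih m m' hc hmm hsum x hx y hy
      · have hm' : m' ≤ -1 := by omega
        set k : ℕ := (-m').toNat with hk
        have hkz : (k : ℤ) = -m' := Int.toNat_of_nonneg (by omega)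
        have h2 : W m' ≤ W (m' - 1) ⊔ (W (-m')).map (N ^ k) := by
          have h := (hgr k).2
          rw [hkz] at h
          simpa using h
        have h3 := h2 hy
        rw [Submodule.mem_sup] at h3
        obtain ⟨a, ha, b, hb, hab⟩ := h3
        obtain ⟨z, hz, rfl⟩ := hb
        have e1 : B x a = 0 := ih m (m' - 1) (by omega) (by omega) (by omega) x hx a ha
        have e2 : B x ((N ^ k) z) = 0 := by
          have hNx : (N ^ k) x ∈ W (m - 2 * k) := aux_map N W hmap k m x hx
          have hidx : m - 2 * (k : ℤ) = m + 2 * m' := by omega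
          rw [hidx] at hNx
          have := ih (-m') (m + 2 * m') (by omega) (by omega) (by omega) z hz
            ((N ^ k) x) hNx
          rw [aux_pow B N hinf k x z, hsymm ((N ^ k) x) z, this, mul_zero]
        calc B x y = B x (a + (N ^ k) z) := by rw [hab]
        _ = B x a + B x ((N ^ k) z) := by rw [map_add]
        _ = 0 := by rw [e1, e2, add_zero]
  intro m m' hsum x hx y hy
  rcases le_total m' m with h | h
  · exact key (m' - m₀).toNat m m' (by omega) h hsum x hx y hy
  · rw [hsymm]
    exact key (m - m₀).toNat m' m (by omega) h (by omega) y hy x hx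

/-- Dimension identity coming from the graded isomorphisms. -/
lemma aux_rank [FiniteDimensional K V] (N : V →ₗ[K] V)
    (W : ℤ → Submodule K V) (hW : IsWeightFiltration N W) (k : ℕ) :
    finrank K (W (k : ℤ)) + finrank K (W (-(k : ℤ) - 1)) =
      finrank K (W ((k : ℤ) - 1)) + finrank K (W (-(k : ℤ))) := by
  obtain ⟨hmono, -, -, hmap, hgr⟩ := hW
  set π := (W (-(k : ℤ) - 1)).mkQ with hπ
  set g : W (k : ℤ) →ₗ[K] V ⧸ (W (-(k : ℤ) - 1)) := (π.comp (N ^ k)).domRestrict (W (k : ℤ)) with hg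
  set h : W (-(k : ℤ)) →ₗ[K] V ⧸ (W (-(k : ℤ) - 1)) := π.domRestrict (W (-(k : ℤ))) with hh
  have hker_g : LinearMap.ker g = (W ((k : ℤ) - 1)).comap (W (k : ℤ)).subtype := by
    ext x
    simp only [LinearMap.mem_ker, hg, LinearMap.domRestrict_apply, LinearMap.comp_apply,
      hπ, Submodule.mkQ_apply, Submodule.Quotient.mk_eq_zero, Submodule.mem_comap,
      Submodule.subtype_apply]
    constructor
    · intro hc
      exact (hgr k).1 ⟨x.2, hc⟩
    · intro hc
      have := aux_map N W hmap k ((k : ℤ) - 1) x hc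
      have hidx : (k : ℤ) - 1 - 2 * k = -(k : ℤ) - 1 := by omega
      rwa [hidx] at this
  have hker_h : LinearMap.ker h = (W (-(k : ℤ) - 1)).comap (W (-(k : ℤ))).subtype := by
    ext x
    simp [hh, hπ, Submodule.Quotient.mk_eq_zero]
  have hNk : (W (k : ℤ)).map (N ^ k) ≤ W (-(k : ℤ)) := by
    rintro _ ⟨x, hx, rfl⟩
    have := aux_map N W hmap k (k : ℤ) x hx
    have hidx : (k : ℤ) - 2 * k = -(k : ℤ) := by omega
    rwa [hidx] at this
  have hbotmap : (W (-(k : ℤ) - 1)).map π = ⊥ := by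
    rw [Submodule.eq_bot_iff]
    rintro _ ⟨x, hx, rfl⟩
    simpa [hπ, Submodule.Quotient.mk_eq_zero] using hx
  have hrange : LinearMap.range g = LinearMap.range h := by
    rw [hg, hh, LinearMap.range_domRestrict, LinearMap.range_domRestrict,
      Submodule.map_comp]
    apply le_antisymm
    · exact Submodule.map_mono hNk
    · have h1 : (W (-(k : ℤ))).map π ≤
          (W (-(k : ℤ) - 1) ⊔ (W (k : ℤ)).map (N ^ k)).map π :=
        Submodule.map_mono (hgr k).2
      rwa [Submodule.map_sup, hbotmap, bot_sup_eq] at h1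
  have e1 := LinearMap.finrank_range_add_finrank_ker g
  have e2 := LinearMap.finrank_range_add_finrank_ker h
  have f1 : finrank K (LinearMap.ker g) = finrank K (W ((k : ℤ) - 1)) := by
    rw [hker_g]
    exact (Submodule.comapSubtypeEquivOfLe (hmono (by omega))).finrank_eq
  have f2 : finrank K (LinearMap.ker h) = finrank K (W (-(k : ℤ) - 1)) := by
    rw [hker_h]
    exact (Submodule.comapSubtypeEquivOfLe (hmono (by omega))).finrank_eq
  rw [f1, hrange] at e1
  rw [f2] at e2
  omega

/-- The weight filtration satisfies `dim W_m + dim W_{-m-1} = dim V`. -/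
lemma aux_sum [FiniteDimensional K V] (N : V →ₗ[K] V)
    (W : ℤ → Submodule K V) (hW : IsWeightFiltration N W) :
    ∀ m : ℤ, finrank K (W m) + finrank K (W (-m - 1)) = finrank K V := by
  obtain ⟨hmono, ⟨mb, hb⟩, ⟨mt, ht⟩, -, -⟩ := id hW
  set s : ℤ → ℕ := fun m => finrank K (W m) + finrank K (W (-m - 1)) with hs
  have hWe : ∀ a b : ℤ, a = b → finrank K (W a) = finrank K (W b) := by
    intro a b hab; rw [hab]
  have hstep : ∀ m : ℤ, 0 ≤ m → s m = s (m - 1) := by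
    intro m hm
    have h := aux_rank N W hW m.toNat
    rw [Int.toNat_of_nonneg hm] at h
    have h2 : s (m - 1) = finrank K (W (m - 1)) + finrank K (W (-m)) := by
      simp only [hs]
      rw [hWe (-(m - 1) - 1) (-m) (by ring)]
    rw [h2]
    exact h
  have hnat : ∀ n : ℕ, s n = s 0 := by
    intro n
    induction n with
    | zero => rfl
    | succ n ih =>
      have h1 : s ((n + 1 : ℕ) : ℤ) = s (((n + 1 : ℕ) : ℤ) - 1) :=
        hstep _ (by positivity)
      have h2 : (((n + 1 : ℕ) : ℤ) - 1) = (n : ℤ) := by push_cast; ring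
      rw [h1, h2, ih]
  have hsym : ∀ m : ℤ, s m = s (-m - 1) := by
    intro m
    simp only [hs]
    rw [hWe (-(-m - 1) - 1) m (by ring)]
    omega
  have hbig : ∃ n : ℕ, s n = finrank K V := by
    refine ⟨(max mt (-mb)).toNat, ?_⟩
    have h1 : W ((max mt (-mb)).toNat : ℤ) = ⊤ := by
      rw [eq_top_iff, ← ht]
      exact hmono (by omega)
    have h2 : W (-((max mt (-mb)).toNat : ℤ) - 1) = ⊥ := by
      rw [eq_bot_iff, ← hb]
      exact hmono (by omega)
    show finrank K (W ((max mt (-mb)).toNat : ℤ)) +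
      finrank K (W (-((max mt (-mb)).toNat : ℤ) - 1)) = finrank K V
    rw [h1, h2, finrank_top, finrank_bot, add_zero]
  obtain ⟨n, hn⟩ := hbig
  have hall : ∀ n' : ℕ, s n' = finrank K V := by
    intro n'; rw [hnat n', ← hnat n, hn]
  intro m
  show s m = finrank K V
  rcases le_or_gt 0 m with hm | hm
  · have : s m = s (m.toNat : ℤ) := by rw [Int.toNat_of_nonneg hm]
    rw [this, hall]
  · have h1 : s m = s (-m - 1) := hsym m
    have h2 : s (-m - 1) = s ((-m - 1).toNat : ℤ) := by
      rw [Int.toNat_of_nonneg (by omega)]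
    rw [h1, h2, hall]

end Aux

/-- The monodromy weight filtration of a nilpotent infinitesimal isometry of a
nondegenerate symmetric bilinear form is self-dual: the `B`-orthogonal
complement of `W m` equals `W (-m-1)`. -/
theorem stmt17 {K V : Type*} [Field K] [CharZero K] [AddCommGroup V] [Module K V]
    [FiniteDimensional K V] (B : V →ₗ[K] V →ₗ[K] K)
    (hsymm : ∀ x y : V, B x y = B y x)
    (hnondeg : ∀ x : V, (∀ y : V, B x y = 0) → x = 0)
    (N : V →ₗ[K] V) (hN : IsNilpotent N)
    (hinf : ∀ x y : V, B (N x) y + B x (N y) = 0)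
    (W : ℤ → Submodule K V) (hW : IsWeightFiltration N W) :
    ∀ (m : ℤ) (x : V), (∀ u ∈ W m, B x u = 0) ↔ x ∈ W (-m - 1) := by
  intro m x
  have horth := aux_orth B hsymm N hinf W hW
  have hinj : Function.Injective (B : V →ₗ[K] Module.Dual K V) := by
    intro a b hab
    have hz : ∀ y, B (a - b) y = 0 := by
      intro y
      rw [map_sub, LinearMap.sub_apply]
      rw [show B a = B b from hab]
      ring
    have := hnondeg _ hz
    exact sub_eq_zero.mp this
  have hsurj : Function.Surjective (B : V →ₗ[K] Module.Dual K V) :=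
    (LinearMap.injective_iff_surjective_of_finrank_eq_finrank
      Subspace.dual_finrank_eq.symm).mp hinj
  let e : V ≃ₗ[K] Module.Dual K V := LinearEquiv.ofBijective B ⟨hinj, hsurj⟩
  set O : Submodule K V := (W m).dualAnnihilator.comap (B : V →ₗ[K] Module.Dual K V)
    with hO
  have hmemO : ∀ z, z ∈ O ↔ ∀ u ∈ W m, B z u = 0 := by
    intro z
    simp [hO, Submodule.mem_comap, Submodule.mem_dualAnnihilator]
  have hle : W (-m - 1) ≤ O := by
    intro z hz
    rw [hmemO]
    intro u hu
    exact horth (-m - 1) m (by omega) z hz u hu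
  have hfr : Module.finrank K O = Module.finrank K (W (-m - 1)) := by
    have hOe : O = (W m).dualAnnihilator.comap (e : V →ₗ[K] Module.Dual K V) := rfl
    have h1 : Module.finrank K O = Module.finrank K (W m).dualAnnihilator := by
      rw [hOe, Submodule.comap_equiv_eq_map_symm]
      exact LinearEquiv.finrank_map_eq e.symm _
    have h2 : Module.finrank K (W m).dualAnnihilator = Module.finrank K (V ⧸ (W m)) :=
      ((Subspace.quotEquivAnnihilator (W m)).finrank_eq).symm
    have h3 := Submodule.finrank_quotient_add_finrank (W m)
    have h4 := aux_sum N W hW m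
    omega
  have heq : W (-m - 1) = O :=
    Submodule.eq_of_le_of_finrank_le hle (by omega)
  rw [heq]
  exact (hmemO x).symm
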